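/- If a vertex u₀ transfers its initial unit weight to a vertex v along a path (u₀, u₁, …, u_k = v) by consecutive total acquisition moves (the move from u_{i-1} to u_i occurring interleaved with possibly other moves), then immediately after the move from u_{i-1} onto u_i, the weight on u_i is at least 2^i. In particular, if u₀'s unit contributed to a weight w on v at some time, then the graph distance from u₀ to v is at most log₂ w. -/

import Mathlib

/-- A total acquisition move: all the weight of `u` is moved to an adjacent
vertex `v`, provided `v` carries at least as much weight as `u`. -/
def AcqMove {V : Type*} [DecidableEq V] (G : SimpleGraph V) (w w' : V → ℕ) : Prop :=
  ∃ u v, G.Adj u v ∧ 0 < w u ∧ w u ≤ w v ∧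
    w' = Function.update (Function.update w v (w v + w u)) u 0

/-- Reachability by a finite sequence of total acquisition moves. -/
def AcqReach {V : Type*} [DecidableEq V] (G : SimpleGraph V) : (V → ℕ) → (V → ℕ) → Prop :=
  Relation.ReflTransGen (AcqMove G)

/-- No total acquisition move is available from `w`. -/
def AcqMaximal {V : Type*} [DecidableEq V] (G : SimpleGraph V) (w : V → ℕ) : Prop :=
  ∀ w', ¬ AcqMove G w w'

/-- The total acquisition number: minimum number of vertices with positive
weight after a maximal sequence of total acquisition moves starting from the
all-ones weight function. -/
noncomputable def totalAcq {V : Type*} [DecidableEq V] (G : SimpleGraph V) : ℕ :=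
  sInf { m | ∃ w, AcqReach G (fun _ => 1) w ∧ AcqMaximal G w ∧
    m = {v | 0 < w v}.ncard }

/-- If a vertex `u 0` transfers its initial unit weight to `v = u (Fin.last k)`
along a path `u 0, u 1, …, u k` by consecutive total acquisition moves,
interleaved with possibly other moves (the protocol `s` makes the move from
`u i` to `u (i+1)` at time `t i`, with times strictly increasing), then
immediately after the move from `u i` onto `u (i+1)` the weight on `u (i+1)`
is at least `2 ^ (i+1)`.  In particular, right after the final move, the graph
distance from `u 0` to `v` is at most `log₂ w`, where `w` is the weight then
held by `v`. -/

private lemma acq_step_mono {V : Type*} [DecidableEq V] (G : SimpleGraph V)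
    (w w' : V → ℕ) (h : AcqMove G w w' ∨ w' = w) (x : V) (hx : 0 < w' x) :
    0 < w x ∧ w x ≤ w' x := by
  rcases h with ⟨a, b, hab, ha, hle, he⟩ | he
  · subst he
    by_cases hxa : x = a
    · subst hxa; simp [Function.update_self] at hx
    · rw [Function.update_of_ne hxa] at hx ⊢
      by_cases hxb : x = b
      · subst hxb
        rw [Function.update_self] at hx ⊢
        omega
      · rw [Function.update_of_ne hxb] at hx ⊢
        exact ⟨hx, le_refl _⟩
  · rw [he] at hx; exact ⟨hx, by rw [he]⟩

private lemma acq_time_mono {V : Type*} [DecidableEq V] (G : SimpleGraph V)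
    (s : ℕ → V → ℕ)
    (hstep : ∀ n, AcqMove G (s n) (s (n + 1)) ∨ s (n + 1) = s n)
    (x : V) : ∀ a b : ℕ, a ≤ b → 0 < s b x → s a x ≤ s b x := by
  intro a b hab
  induction b, hab using Nat.le_induction with
  | base => exact fun _ => le_refl _
  | succ b hab ih =>
    intro hpos
    obtain ⟨h1, h2⟩ := acq_step_mono G (s b) (s (b+1)) (hstep b) x hpos
    exact le_trans (ih h1) h2

theorem path_transfer_weight_ge_two_pow {V : Type*} [DecidableEq V]
    (G : SimpleGraph V) (k : ℕ)
    (s : ℕ → V → ℕ) (h0 : s 0 = fun _ => 1)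
    (hstep : ∀ n, AcqMove G (s n) (s (n + 1)) ∨ s (n + 1) = s n)
    (u : Fin (k + 1) → V)
    (hadj : ∀ i : Fin k, G.Adj (u i.castSucc) (u i.succ))
    (t : Fin k → ℕ) (ht : StrictMono t)
    (hmove : ∀ i : Fin k,
      0 < s (t i) (u i.castSucc) ∧
      s (t i) (u i.castSucc) ≤ s (t i) (u i.succ) ∧
      s (t i + 1) = Function.update
        (Function.update (s (t i)) (u i.succ)
          (s (t i) (u i.succ) + s (t i) (u i.castSucc))) (u i.castSucc) 0) :
    (∀ i : Fin k, 2 ^ ((i : ℕ) + 1) ≤ s (t i + 1) (u i.succ)) ∧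
    (∀ i : Fin k, (i : ℕ) = k - 1 →
      G.dist (u 0) (u (Fin.last k)) ≤ Nat.log 2 (s (t i + 1) (u (Fin.last k)))) := by

  have hne : ∀ i : Fin k, u i.succ ≠ u i.castSucc := fun i => (hadj i).ne'
  have hval : ∀ i : Fin k,
      s (t i + 1) (u i.succ) = s (t i) (u i.succ) + s (t i) (u i.castSucc) := by
    intro i
    rw [(hmove i).2.2, Function.update_of_ne (hne i), Function.update_self]
  have key : ∀ m : ℕ, ∀ i : Fin k, (i : ℕ) = m →
      2 ^ (m + 1) ≤ s (t i + 1) (u i.succ) := by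
    intro m
    induction m with
    | zero =>
      intro i hi
      have h := hmove i
      rw [hval i]
      have h1 := h.1
      have h2 := h.2.1
      omega
    | succ m ih =>
      intro i hi
      have hm : m < k := by omega
      set j : Fin k := ⟨m, hm⟩ with hj
      have hji : j.succ = i.castSucc := by
        apply Fin.ext
        simp [hj, hi]
      have hprev : 2 ^ (m + 1) ≤ s (t j + 1) (u i.castSucc) := by
        rw [← hji]; exact ih j rfl
      have htlt : t j + 1 ≤ t i := ht (show j < i by simp [Fin.lt_def, hj, hi])
      have hmono := acq_time_mono G s hstep (u i.castSucc) (t j + 1) (t i) htlt (hmove i).1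
      have h2 := (hmove i).2.1
      rw [hval i]
      have : 2 ^ (m + 1) ≤ s (t i) (u i.castSucc) := le_trans hprev hmono
      calc 2 ^ (m + 1 + 1) = 2 ^ (m + 1) + 2 ^ (m + 1) := by ring
        _ ≤ s (t i) (u i.succ) + s (t i) (u i.castSucc) := by omega
  refine ⟨fun i => key i i rfl, ?_⟩
  intro i hi
  have hk : 0 < k := i.pos
  have hlast : i.succ = Fin.last k := by
    apply Fin.ext
    simp [Fin.val_last, hi]
    omega
  have hkey : 2 ^ k ≤ s (t i + 1) (u (Fin.last k)) := by
    have h1 := key (i : ℕ) i rfl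
    rw [hlast] at h1
    have h2 : 2 ^ k ≤ 2 ^ ((i : ℕ) + 1) := by
      apply Nat.pow_le_pow_right (by norm_num)
      omega
    omega
  have hwalk : ∀ j : Fin (k + 1), ∃ p : G.Walk (u 0) (u j), p.length = (j : ℕ) := by
    intro j
    induction j using Fin.induction with
    | zero => exact ⟨SimpleGraph.Walk.nil, rfl⟩
    | succ j ih =>
      obtain ⟨p, hp⟩ := ih
      exact ⟨p.concat (hadj j), by simp [hp]⟩
  obtain ⟨p, hp⟩ := hwalk (Fin.last k)
  have hdist : G.dist (u 0) (u (Fin.last k)) ≤ k := by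
    have := SimpleGraph.dist_le p
    rw [hp, Fin.val_last] at this
    exact this
  have hlog : k ≤ Nat.log 2 (s (t i + 1) (u (Fin.last k))) :=
    (Nat.le_log_iff_pow_le (by norm_num) (by have := Nat.two_pow_pos k; omega)).mpr hkey
  omega
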